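/- Let q ∈ ℕ₊ and let m be a q-uniformly rational flow measure on a tree T with root at infinity. Then (T,m) is a flow quotient of the homogeneous tree (T_q, m_{T_q}): for every w̄₀ ∈ T_q and every w₀ ∈ T there exists a flow submersion π : (T_q, m_{T_q}) → (T,m) such that π(w̄₀) = w₀. -/

import Mathlib

open scoped ENNReal NNReal
open MeasureTheory Filter

namespace Flow

/-- A tree with root at infinity: a set with a predecessor map, no cycles,
joint ancestors, and finitely many successors at each vertex. -/
structure RootedTree (T : Type*) where
  pred : T → T
  no_cycle : ∀ (x : T) (k : ℕ), 1 ≤ k → pred^[k] x ≠ x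
  connected : ∀ x y : T, ∃ k l : ℕ, pred^[k] x = pred^[l] y
  succ_finite : ∀ x : T, {y : T | pred y = x}.Finite

variable {T T₁ T₂ : Type*}

/-- The graph distance on a tree with root at infinity. -/
noncomputable def RootedTree.dist (t : RootedTree T) (x y : T) : ℕ :=
  sInf {n : ℕ | ∃ k l : ℕ, k + l = n ∧ t.pred^[k] x = t.pred^[l] y}

/-- The partial order: `x ≤ y` iff `y` is an ancestor of `x`. -/
def RootedTree.le (t : RootedTree T) (x y : T) : Prop :=
  ∃ k : ℕ, t.pred^[k] x = y

def RootedTree.lt (t : RootedTree T) (x y : T) : Prop :=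
  t.le x y ∧ x ≠ y

/-- A flow measure on a tree with root at infinity. -/
structure IsFlowMeasure (t : RootedTree T) (m : T → ℝ) : Prop where
  pos : ∀ x, 0 < m x
  flow : ∀ x, m x = ∑' y : {y : T // t.pred y = x}, m (y : T)

/-- A level function on a tree with root at infinity. -/
def IsLevel (t : RootedTree T) (lev : T → ℤ) : Prop :=
  ∀ x : T, lev (t.pred x) = lev x + 1

/-- A homogeneous tree where every vertex has exactly `q` successors. -/
def IsHomogeneous (t : RootedTree T) (q : ℕ) : Prop :=
  ∀ x : T, {y : T | t.pred y = x}.ncard = q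

/-- The canonical flow measure `q ^ ℓ(x)` on the homogeneous tree of index `q`. -/
noncomputable def canonicalFlow (q : ℕ) (lev : T → ℤ) : T → ℝ :=
  fun x => (q : ℝ) ^ (lev x)

/-- A `q`-uniformly rational flow measure. -/
def UniformlyRational (t : RootedTree T) (m : T → ℝ) (q : ℕ) : Prop :=
  ∀ x : T, ∃ n : ℕ, 0 < n ∧ (q : ℝ) * m x = (n : ℝ) * m (t.pred x)

/-- The `L^p(m)` norm of a function on a flow tree, `p ∈ [1,∞]`. -/
noncomputable def lpNorm (m : T → ℝ) (p : ℝ≥0∞) (f : T → ℂ) : ℝ≥0∞ :=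
  if p = ∞ then ⨆ x : T, (‖f x‖₊ : ℝ≥0∞)
  else (∑' x : T, (‖f x‖₊ : ℝ≥0∞) ^ p.toReal * ENNReal.ofReal (m x)) ^ (1 / p.toReal)

/-- The measure of a subset of a flow tree. -/
noncomputable def setMass (m : T → ℝ) (S : Set T) : ℝ≥0∞ :=
  ∑' x : S, ENNReal.ofReal (m (x : T))

/-- Boundedness of an operator on `L^p(m)`. -/
def BoundedOnLp (m : T → ℝ) (p : ℝ≥0∞) (O : (T → ℂ) → (T → ℂ)) : Prop :=
  ∃ C : ℝ, 0 < C ∧ ∀ f : T → ℂ, lpNorm m p f < ∞ →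
    lpNorm m p (O f) ≤ ENNReal.ofReal C * lpNorm m p f

/-- Boundedness on `L^p(m)` of an operator defined on `L²(m) ∩ L^p(m)`. -/
def BoundedOnLp₂ (m : T → ℝ) (p : ℝ≥0∞) (O : (T → ℂ) → (T → ℂ)) : Prop :=
  ∃ C : ℝ, 0 < C ∧ ∀ f : T → ℂ, lpNorm m 2 f < ∞ → lpNorm m p f < ∞ →
    lpNorm m p (O f) ≤ ENNReal.ofReal C * lpNorm m p f

/-- The `L^p → L^p` operator norm (supremum over the unit ball). -/
noncomputable def opNormLp (m : T → ℝ) (p : ℝ≥0∞) (O : (T → ℂ) → (T → ℂ)) : ℝ≥0∞ :=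
  ⨆ f : {f : T → ℂ // lpNorm m p f ≤ 1}, lpNorm m p (O f.1)

/-- The `L^p → L^p` operator norm of an operator defined on `L²(m) ∩ L^p(m)`. -/
noncomputable def opNormLp₂ (m : T → ℝ) (p : ℝ≥0∞) (O : (T → ℂ) → (T → ℂ)) : ℝ≥0∞ :=
  ⨆ f : {f : T → ℂ // lpNorm m 2 f < ∞ ∧ lpNorm m p f ≤ 1}, lpNorm m p (O f.1)

/-- The flow measure `m` is locally doubling. -/
def LocallyDoubling (t : RootedTree T) (m : T → ℝ) : Prop :=
  ∀ R : ℝ, 0 < R → ∃ D : ℝ, 0 < D ∧ ∀ (x : T) (r : ℝ), 0 < r → r ≤ R →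
    setMass m {y : T | (t.dist x y : ℝ) ≤ 2 * r} ≤
      ENNReal.ofReal D * setMass m {y : T | (t.dist x y : ℝ) ≤ r}

/-- The shift operator `Σ f (x) = f(𝔭(x))`. -/
noncomputable def shiftOp (t : RootedTree T) (f : T → ℂ) : T → ℂ :=
  fun x => f (t.pred x)

/-- The adjoint shift `Σ* f (x) = m(x)⁻¹ Σ_{y ∈ succ(x)} f(y) m(y)`. -/
noncomputable def shiftStarOp (t : RootedTree T) (m : T → ℝ) (f : T → ℂ) : T → ℂ :=
  fun x => ((m x : ℂ))⁻¹ * ∑' y : {y : T // t.pred y = x}, f (y : T) * ((m (y : T) : ℂ))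

/-- The flow gradient `∇ = I - Σ`. -/
noncomputable def gradOp (t : RootedTree T) (f : T → ℂ) : T → ℂ :=
  fun x => f x - f (t.pred x)

/-- The adjoint flow gradient `∇* = I - Σ*`. -/
noncomputable def gradStarOp (t : RootedTree T) (m : T → ℝ) (f : T → ℂ) : T → ℂ :=
  fun x => f x - shiftStarOp t m f x

/-- The flow Laplacian `𝓛 = I - (Σ + Σ*)/2`. -/
noncomputable def lapOp (t : RootedTree T) (m : T → ℝ) (f : T → ℂ) : T → ℂ :=
  fun x => f x - (shiftOp t f x + shiftStarOp t m f x) / 2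

/-- The heat semigroup `e^{-s𝓛}`, given by the exponential power series. -/
noncomputable def heatOp (t : RootedTree T) (m : T → ℝ) (s : ℝ) (f : T → ℂ) : T → ℂ :=
  fun x => ∑' k : ℕ, ((-(s : ℂ)) ^ k / (Nat.factorial k : ℂ)) * ((lapOp t m)^[k] f) x

/-- The integral kernel of an operator: `K_O(x,y) = O(𝟙_{y})(x) / m(y)`. -/
noncomputable def opKernel (m : T → ℝ) (O : (T → ℂ) → (T → ℂ)) (x y : T) : ℂ :=
  O (Set.indicator {y} fun _ => (1 : ℂ)) x / (m y : ℂ)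

/-- The (formal) adjoint of an operator, given by the conjugate-transpose kernel. -/
noncomputable def adjointOp (m : T → ℝ) (O : (T → ℂ) → (T → ℂ)) (f : T → ℂ) : T → ℂ :=
  fun x => ∑' y : T, (starRingEnd ℂ) (opKernel m O y x) * f y * ((m y : ℂ))

/-- A polynomial applied to an operator. -/
noncomputable def polyApply (L : (T → ℂ) → (T → ℂ)) (P : Polynomial ℂ) (f : T → ℂ) : T → ℂ :=
  fun x => ∑ i ∈ Finset.range (P.natDegree + 1), P.coeff i * (L^[i] f) x

/-- `B` is the continuous functional calculus `F(L)` of the self-adjoint operator `L`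
(whose spectrum is contained in `[0,2]`): `B` is approximated on `L²(m)` by polynomials
in `L`, with operator-norm error controlled by the sup-norm error on `[0,2]`. -/
def IsCfcOf (m : T → ℝ) (L : (T → ℂ) → (T → ℂ)) (F : ℝ → ℂ)
    (B : (T → ℂ) → (T → ℂ)) : Prop :=
  ∀ ε : ℝ, 0 < ε → ∃ P : Polynomial ℂ,
    (∀ lam : ℝ, lam ∈ Set.Icc (0 : ℝ) 2 → ‖F lam - P.eval (lam : ℂ)‖ ≤ ε) ∧
    ∀ f : T → ℂ, lpNorm m 2 f < ∞ →
      lpNorm m 2 (fun x => B f x - polyApply L P f x) ≤ ENNReal.ofReal ε * lpNorm m 2 f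

/-- `Φ` is the Borel functional calculus of the self-adjoint operator `L` with spectrum
in `[0,2]`: it agrees with the continuous functional calculus on continuous functions and
satisfies dominated convergence (bounded pointwise convergence on `[0,2]` implies strong
convergence on `L²(m)`). These properties determine `Φ F` uniquely on `L²(m)` for every
bounded Borel `F`. -/
structure IsBorelFC (m : T → ℝ) (L : (T → ℂ) → (T → ℂ))
    (Φ : (ℝ → ℂ) → (T → ℂ) → (T → ℂ)) : Prop where
  cfc_agree : ∀ F : ℝ → ℂ, ContinuousOn F (Set.Icc 0 2) → IsCfcOf m L F (Φ F)
  dominated : ∀ (Fs : ℕ → ℝ → ℂ) (F : ℝ → ℂ) (C : ℝ),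
    (∀ n, Measurable (Fs n)) → Measurable F →
    (∀ n, ∀ lam ∈ Set.Icc (0 : ℝ) 2, ‖Fs n lam‖ ≤ C) →
    (∀ lam ∈ Set.Icc (0 : ℝ) 2, Tendsto (fun n => Fs n lam) atTop (nhds (F lam))) →
    ∀ f : T → ℂ, lpNorm m 2 f < ∞ →
      Tendsto (fun n => lpNorm m 2 (fun x => Φ (Fs n) f x - Φ F f x)) atTop (nhds 0)

/-- The truncated Riesz transform `∇ F_N(𝓛)`, where
`F_N(s) = π^{-1/2} ∫₀^N e^{-ts} t^{-1/2} dt`. -/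
noncomputable def rieszApprox (t : RootedTree T) (m : T → ℝ) (N : ℕ) (f : T → ℂ) : T → ℂ :=
  fun x => (Real.sqrt Real.pi)⁻¹ •
    ∫ u in Set.Ioc (0 : ℝ) (N : ℝ), (Real.sqrt u)⁻¹ • gradOp t (heatOp t m u f) x

/-- `g = R f`, where the Riesz transform `R = ∇ 𝓛^{-1/2}` is the limit of the truncated
Riesz transforms `∇ F_N(𝓛)` in the strong operator topology of `L²(m)`. -/
def IsRieszOf (t : RootedTree T) (m : T → ℝ) (f g : T → ℂ) : Prop :=
  Tendsto (fun N : ℕ => lpNorm m 2 (fun x => rieszApprox t m N f x - g x)) atTop (nhds 0)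

/-- The integral kernel of the Riesz transform:
`K_R(x,y) = π^{-1/2} ∫₀^∞ K_{∇ e^{-u𝓛}}(x,y) u^{-1/2} du`. -/
noncomputable def rieszKernel (t : RootedTree T) (m : T → ℝ) (x y : T) : ℂ :=
  (Real.sqrt Real.pi)⁻¹ •
    ∫ u in Set.Ioi (0 : ℝ),
      (Real.sqrt u)⁻¹ • opKernel m (fun f => gradOp t (heatOp t m u f)) x y

/-- The convolution kernel `k̃_ℤ(n) = (2√2/π) n/(n² - 1/4)` of the skew-symmetric part of
the discrete Hilbert transform. -/
noncomputable def ktZ (n : ℤ) : ℂ :=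
  ((2 * Real.sqrt 2 / Real.pi : ℝ) : ℂ) * (n : ℂ) / ((n : ℂ) ^ 2 - 1 / 4)

/-- `lam` belongs to the resolvent set of the flow Laplacian on `L^p(m)`:
`lam - 𝓛` has a bounded two-sided inverse on `L^p(m)`. -/
def InResolvent (t : RootedTree T) (m : T → ℝ) (p : ℝ≥0∞) (lam : ℂ) : Prop :=
  ∃ B : (T → ℂ) → (T → ℂ), BoundedOnLp m p B ∧
    (∀ f : T → ℂ, lpNorm m p f < ∞ →
      B (fun x => lam * f x - lapOp t m f x) = f) ∧
    (∀ f : T → ℂ, lpNorm m p f < ∞ →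
      (fun x => lam * B f x - lapOp t m (B f) x) = f)

/-- A submersion between trees with root at infinity. -/
structure IsSubmersion (t₁ : RootedTree T₁) (t₂ : RootedTree T₂) (π : T₁ → T₂) : Prop where
  map_pred : ∀ x : T₁, π (t₁.pred x) = t₂.pred (π x)
  map_succ : ∀ x : T₁, π '' {y : T₁ | t₁.pred y = x} = {z : T₂ | t₂.pred z = π x}

/-- `π`-compatibility of the flow measures `m₁`, `m₂`:
`m₂(π x)/m₂(𝔭(π x)) = m₁(π⁻¹{π x} ∩ succ(𝔭 x))/m₁(𝔭 x)`. -/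
def FlowCompatible (t₁ : RootedTree T₁) (t₂ : RootedTree T₂) (π : T₁ → T₂)
    (m₁ : T₁ → ℝ) (m₂ : T₂ → ℝ) : Prop :=
  ∀ x : T₁,
    m₂ (π x) / m₂ (t₂.pred (π x)) =
      (∑' y : {y : T₁ // π y = π x ∧ t₁.pred y = t₁.pred x}, m₁ (y : T₁)) / m₁ (t₁.pred x)

/-- `O'` witnesses `π`-compatibility of `O`: `O Φ_π = Φ_π O'` and `O* Φ_π = Φ_π O'*`
on `L^∞(m₂)`, where `Φ_π f = f ∘ π` is the lifting operator. -/
def CompatiblePair (t₁ : RootedTree T₁) (t₂ : RootedTree T₂) (π : T₁ → T₂)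
    (m₁ : T₁ → ℝ) (m₂ : T₂ → ℝ)
    (O : (T₁ → ℂ) → (T₁ → ℂ)) (O' : (T₂ → ℂ) → (T₂ → ℂ)) : Prop :=
  (∀ f : T₂ → ℂ, lpNorm m₂ ∞ f < ∞ → O (f ∘ π) = (O' f) ∘ π) ∧
  (∀ f : T₂ → ℂ, lpNorm m₂ ∞ f < ∞ →
    adjointOp m₁ O (f ∘ π) = (adjointOp m₂ O' f) ∘ π)

/-- The squared Sobolev norm `∫ (1+ξ²)^s |G(ξ)|² dξ`, applied to the Fourier transform `G`
of the function under consideration. -/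
noncomputable def sobolevWeight (s : ℝ) (G : ℝ → ℂ) : ℝ≥0∞ :=
  ∫⁻ ξ : ℝ, ENNReal.ofReal ((1 + ξ ^ 2) ^ s) * (‖G ξ‖₊ : ℝ≥0∞) ^ 2

/-- The Sobolev norm `(∫ (1+ξ²)^s |G(ξ)|² dξ)^{1/2}`. -/
noncomputable def sobolevNorm (s : ℝ) (G : ℝ → ℂ) : ℝ≥0∞ :=
  sobolevWeight s G ^ (1 / 2 : ℝ)

/-- `G` is the (distributional) Fourier transform of `F`, characterised by duality
against Schwartz functions. -/
def FourierCoupled (F G : ℝ → ℂ) : Prop :=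
  ∀ φ : SchwartzMap ℝ ℂ,
    (∫ x : ℝ, F x * (FourierTransform.fourier (fun y : ℝ => (φ y : ℂ)) : ℝ → ℂ) x) = ∫ ξ : ℝ, G ξ * φ ξ

/-- The coefficients `g_F(n) = -(i/π) ∫_{-π}^{π} sin θ · F(1-cos θ) e^{inθ} dθ`,
i.e. `∇̃_ℤ k_{F(Δ_ℤ)}(n)` when `F` is bounded Borel on `[0,2]`. -/
noncomputable def gCoef (F : ℝ → ℂ) (n : ℤ) : ℂ :=
  (-(Complex.I / (Real.pi : ℂ))) *
    ∫ θ in Set.Ioc (-Real.pi) Real.pi,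
      ((Real.sin θ : ℂ)) * F (1 - Real.cos θ) * Complex.exp ((n : ℂ) * (θ : ℂ) * Complex.I)

lemma predZ_iter (k : ℕ) (n : ℤ) : (fun n : ℤ => n + 1)^[k] n = n + k := by
  induction k generalizing n with
  | zero => simp
  | succ k ih =>
      rw [Function.iterate_succ_apply, ih]
      push_cast
      ring

/-- `ℤ` as a tree with root at infinity (`𝔭(n) = n+1`); together with the flow measure
`mZ ≡ 1` this is the homogeneous flow tree `T₁`, whose flow Laplacian is the discrete
Laplacian `Δ_ℤ`. -/
noncomputable def treeZ : RootedTree ℤ where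
  pred n := n + 1
  no_cycle x k hk := by rw [predZ_iter]; omega
  connected x y := ⟨(y - x).toNat, (x - y).toNat, by rw [predZ_iter, predZ_iter]; omega⟩
  succ_finite x := (Set.finite_singleton (x - 1)).subset (by
    intro y hy
    simp only [Set.mem_setOf_eq] at hy
    simp only [Set.mem_singleton_iff]
    omega)

/-- The counting flow measure on `ℤ`. -/
def mZ : ℤ → ℝ := fun _ => 1

/-- The convolution kernel of a translation-invariant operator on `ℤ`: `k_B = B δ₀`. -/
noncomputable def kZker (B : (ℤ → ℂ) → (ℤ → ℂ)) (n : ℤ) : ℂ :=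
  B (Set.indicator {0} fun _ => (1 : ℂ)) n

end Flow


namespace Flow

/-- Fiber of `Sigma.fst` over `z` in `Σ s, Fin (c s)` is equivalent to `Fin (c z)`. -/
def fiberEquiv {S : Type*} (c : S → ℕ) (z : S) :
    {p : Σ s : S, Fin (c s) // p.1 = z} ≃ Fin (c z) where
  toFun p := Fin.cast (congrArg c p.2) p.1.2
  invFun j := ⟨⟨z, j⟩, rfl⟩
  left_inv := by rintro ⟨⟨s, j⟩, h⟩; dsimp at h; subst h; rfl
  right_inv j := rfl

open Classical in
/-- Auxiliary recursion used to build the submersion. -/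
noncomputable def piAux {Tq T : Type*} (pq : Tq → Tq) (a : ℕ → Tq) (b : ℕ → T)
    (w : T) (step : Tq → T → T) (k : ℕ) : Tq → T :=
  Nat.rec (fun x => if h : ∃ l, x = a l then b h.choose else w)
    (fun _ ih x => if h : ∃ l, x = a l then b h.choose else step x (ih (pq x))) k

open Classical in
theorem piAux_zero {Tq T : Type*} (pq : Tq → Tq) (a : ℕ → Tq) (b : ℕ → T)
    (w : T) (step : Tq → T → T) (x : Tq) :
    piAux pq a b w step 0 x = if h : ∃ l, x = a l then b h.choose else w := rfl

open Classical in
theorem piAux_succ {Tq T : Type*} (pq : Tq → Tq) (a : ℕ → Tq) (b : ℕ → T)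
    (w : T) (step : Tq → T → T) (k : ℕ) (x : Tq) :
    piAux pq a b w step (k+1) x =
      if h : ∃ l, x = a l then b h.choose
      else step x (piAux pq a b w step k (pq x)) := rfl

end Flow

/-- Every `q`-uniformly rational flow tree `(T,m)` is a flow quotient
of the homogeneous tree `(T_q, m_{T_q})` (every vertex of `T_q` has exactly `q`
successors and `m_{T_q} = q^{ℓ}` is the canonical flow measure): for every `w̄₀ ∈ T_q`
and `w₀ ∈ T` there is a flow submersion `π : (T_q, m_{T_q}) → (T,m)` with
`π(w̄₀) = w₀`. -/
theorem uniformly_rational_is_quotient_of_homogeneous {T : Type*} [Nonempty T]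
    (t : Flow.RootedTree T) (m : T → ℝ) (hm : Flow.IsFlowMeasure t m)
    (q : ℕ) (hq : 0 < q) (hrat : Flow.UniformlyRational t m q)
    {Tq : Type*} (tq : Flow.RootedTree Tq) (hhom : Flow.IsHomogeneous tq q)
    (levq : Tq → ℤ) (hlevq : Flow.IsLevel tq levq)
    (w0' : Tq) (w0 : T) :
    ∃ π : Tq → T, Flow.IsSubmersion tq t π ∧
      Flow.FlowCompatible tq t π (Flow.canonicalFlow q levq) m ∧
      π w0' = w0 := by
  classical
  -- the rationality integers
  choose n hn1 hn2 using hrat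
  have hqpos : (0:ℝ) < q := by exact_mod_cast hq
  have hq0' : (q:ℝ) ≠ 0 := hqpos.ne'
  -- the spines
  obtain ⟨a, haIt⟩ : ∃ a : ℕ → Tq, ∀ k, a k = tq.pred^[k] w0' := ⟨_, fun _ => rfl⟩
  obtain ⟨b, hbIt⟩ : ∃ b : ℕ → T, ∀ k, b k = t.pred^[k] w0 := ⟨_, fun _ => rfl⟩
  have ha0 : a 0 = w0' := (haIt 0).trans (Function.iterate_zero_apply _ _)
  have hb0 : b 0 = w0 := (hbIt 0).trans (Function.iterate_zero_apply _ _)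
  have haS : ∀ l, tq.pred (a l) = a (l+1) := fun l => by
    rw [haIt, haIt]; exact (Function.iterate_succ_apply' _ _ _).symm
  have hbS : ∀ l, t.pred (b l) = b (l+1) := fun l => by
    rw [hbIt, hbIt]; exact (Function.iterate_succ_apply' _ _ _).symm
  have haI : ∀ k l : ℕ, a k = a l → k = l := by
    have hlt : ∀ k l : ℕ, k < l → a k ≠ a l := by
      intro k l hkl heq
      refine tq.no_cycle (a k) (l - k) (by omega) ?_
      calc tq.pred^[l-k] (a k) = tq.pred^[l-k] (tq.pred^[k] w0') := by rw [haIt]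
        _ = tq.pred^[l-k+k] w0' := (Function.iterate_add_apply _ _ _ _).symm
        _ = a l := by rw [show l - k + k = l from by omega, haIt]
        _ = a k := heq.symm
    intro k l hkl
    rcases lt_trichotomy k l with h|h|h
    · exact absurd hkl (hlt k l h)
    · exact h
    · exact absurd hkl.symm (hlt l k h)
  -- Fintype instances
  haveI instT : ∀ v : T, Fintype {z : T // t.pred z = v} := fun v => (t.succ_finite v).fintype
  -- the sum of the rationality integers over the successors of a vertex is q
  have sumn : ∀ v : T, (∑ z : {z : T // t.pred z = v}, n z.1) = q := by
    intro v
    have hfl := hm.flow v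
    rw [tsum_fintype] at hfl
    have hs : (q:ℝ) * m v = (∑ z : {z : T // t.pred z = v}, (n z.1 : ℝ)) * m v := by
      calc (q:ℝ) * m v = q * ∑ z : {z : T // t.pred z = v}, m z.1 := by rw [← hfl]
        _ = ∑ z : {z : T // t.pred z = v}, (q:ℝ) * m z.1 := Finset.mul_sum _ _ _
        _ = ∑ z : {z : T // t.pred z = v}, (n z.1 : ℝ) * m v := by
            refine Finset.sum_congr rfl fun z _ => ?_
            rw [hn2 z.1, z.2]
        _ = (∑ z : {z : T // t.pred z = v}, (n z.1 : ℝ)) * m v := (Finset.sum_mul _ _ _).symm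
    have := mul_right_cancel₀ (hm.pos v).ne' hs
    exact_mod_cast this.symm
  -- enumerations of the successor sets in Tq
  have hEq : ∀ x : Tq, Nonempty ({y : Tq // tq.pred y = x} ≃ Fin q) := by
    intro x
    haveI : Fintype {y : Tq // tq.pred y = x} := (tq.succ_finite x).fintype
    refine ⟨Fintype.equivFinOfCardEq ?_⟩
    rw [← Nat.card_eq_fintype_card,
      show Nat.card {y : Tq // tq.pred y = x} = Set.ncard {y : Tq | tq.pred y = x} from
        Nat.card_coe_set_eq _]
    exact hhom x
  have eE : ∀ x : Tq, {y : Tq // tq.pred y = x} ≃ Fin q := fun x => (hEq x).some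
  -- the local choosers
  have chooser : ∀ (x : Tq) (v : T), ∃ d : Fin q → {z : T // t.pred z = v},
      (∀ z : T, ∀ _ : t.pred z = v, Nat.card {i : Fin q // (d i : T) = z} = n z) ∧
      (∀ l : ℕ, x = a (l+1) → v = b (l+1) → ∀ hp : tq.pred (a l) = x,
        ((d (eE x ⟨a l, hp⟩)) : T) = b l) := by
    intro x v
    obtain ⟨d₀, hfib⟩ : ∃ d₀ : Fin q → {z : T // t.pred z = v},
        ∀ z : {z : T // t.pred z = v}, Nat.card {i : Fin q // d₀ i = z} = n z.1 := by
      have hcard : Fintype.card (Σ z : {z : T // t.pred z = v}, Fin (n z.1)) = q := by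
        rw [Fintype.card_sigma]
        simp only [Fintype.card_fin]
        exact sumn v
      refine ⟨fun i => ((Fintype.equivFinOfCardEq hcard).symm i).1, fun z => ?_⟩
      rw [Nat.card_congr (((Fintype.equivFinOfCardEq hcard).symm.subtypeEquiv
        fun i => Iff.rfl).trans (Flow.fiberEquiv (fun z : {z : T // t.pred z = v} => n z.1) z))]
      simp [Nat.card_eq_fintype_card]
    have hval : ∀ (d' : Fin q → {z : T // t.pred z = v}) (z : T) (hz : t.pred z = v),
        Nat.card {i : Fin q // (d' i : T) = z} = Nat.card {i : Fin q // d' i = ⟨z, hz⟩} :=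
      fun d' z hz => Nat.card_congr (Equiv.subtypeEquivRight fun i =>
        ⟨fun h => Subtype.ext h, fun h => congrArg Subtype.val h⟩)
    by_cases hsp : ∃ l, x = a (l+1) ∧ v = b (l+1)
    · obtain ⟨l₀, hx₀, hv₀⟩ := hsp
      have hpa : tq.pred (a l₀) = x := by rw [hx₀]; exact haS l₀
      have hz₀ : t.pred (b l₀) = v := by rw [hv₀]; exact hbS l₀
      have hpos : 0 < Nat.card {i : Fin q // d₀ i = ⟨b l₀, hz₀⟩} := by
        rw [hfib ⟨b l₀, hz₀⟩]; exact hn1 (b l₀)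
      obtain ⟨⟨i₁, hi₁⟩⟩ := (Nat.card_pos_iff.mp hpos).1
      refine ⟨fun i => d₀ (Equiv.swap (eE x ⟨a l₀, hpa⟩) i₁ i), ?_, ?_⟩
      · intro z hz
        rw [hval _ z hz]
        exact (Nat.card_congr ((Equiv.swap (eE x ⟨a l₀, hpa⟩) i₁).subtypeEquiv
          fun i => Iff.rfl)).trans (hfib ⟨z, hz⟩)
      · intro l hx hv hp
        have hll : l = l₀ := by
          have := haI (l+1) (l₀+1) (hx.symm.trans hx₀)
          omega
        subst hll
        have he : eE x ⟨a l, hp⟩ = eE x ⟨a l, hpa⟩ := rfl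
        rw [he]
        simp only [Equiv.swap_apply_left, hi₁]
    · refine ⟨d₀, fun z hz => (hval d₀ z hz).trans (hfib ⟨z, hz⟩),
        fun l hx hv _ => absurd ⟨l, hx, hv⟩ hsp⟩
  choose D hD1 hD2 using chooser
  -- the step function
  obtain ⟨stepv, hstepv⟩ : ∃ s : Tq → T → T, ∀ (y x' : Tq) (hy : tq.pred y = x') (v : T),
      s y v = ((D x' v (eE x' ⟨y, hy⟩)) : T) := by
    refine ⟨fun y v => ((D (tq.pred y) v (eE (tq.pred y) ⟨y, rfl⟩)) : T), ?_⟩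
    intro y x' hy v
    subst hy
    rfl
  have hstepv_pred : ∀ y v, t.pred (stepv y v) = v := fun y v => by
    rw [hstepv y (tq.pred y) rfl v]
    exact (D (tq.pred y) v (eE (tq.pred y) ⟨y, rfl⟩)).2
  -- depth
  have hdep : ∀ x : Tq, ∃ k : ℕ, ∃ l : ℕ, tq.pred^[k] x = a l := by
    intro x
    obtain ⟨k, l, h⟩ := tq.connected x w0'
    exact ⟨k, l, by rw [haIt l]; exact h⟩
  obtain ⟨depth, hdspec, hdmin⟩ : ∃ depth : Tq → ℕ,
      (∀ x, ∃ l, tq.pred^[depth x] x = a l) ∧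
      (∀ x k, (∃ l, tq.pred^[k] x = a l) → depth x ≤ k) :=
    ⟨fun x => Nat.find (hdep x), fun x => Nat.find_spec (hdep x),
      fun x k hk => Nat.find_min' (hdep x) hk⟩
  -- the submersion
  obtain ⟨π, hπ⟩ : ∃ π : Tq → T, ∀ x, π x = Flow.piAux tq.pred a b w0 stepv (depth x) x :=
    ⟨_, fun _ => rfl⟩
  have hPspine : ∀ (j : ℕ) (x : Tq) (l : ℕ), x = a l →
      Flow.piAux tq.pred a b w0 stepv j x = b l := by
    intro j x l hx
    have h' : ∃ l, x = a l := ⟨l, hx⟩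
    have hc : h'.choose = l := haI _ _ (h'.choose_spec.symm.trans hx)
    cases j with
    | zero => rw [Flow.piAux_zero, dif_pos h', hc]
    | succ k => rw [Flow.piAux_succ, dif_pos h', hc]
  have hstable : ∀ (k : ℕ) (x : Tq), depth x ≤ k →
      Flow.piAux tq.pred a b w0 stepv k x = π x := by
    intro k
    induction k using Nat.strong_induction_on with
    | _ k IH =>
      intro x hxk
      by_cases hsp : ∃ l, x = a l
      · obtain ⟨l, hl⟩ := hsp
        rw [hPspine k x l hl, hπ x, hPspine (depth x) x l hl]
      · have hd1 : depth x ≠ 0 := by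
          intro h0
          obtain ⟨l, hl⟩ := hdspec x
          rw [h0, Function.iterate_zero_apply] at hl
          exact hsp ⟨l, hl⟩
        obtain ⟨d', hd'⟩ : ∃ d', depth x = d' + 1 := ⟨depth x - 1, by omega⟩
        have hdp : depth (tq.pred x) ≤ d' := by
          obtain ⟨l, hl⟩ := hdspec x
          rw [hd', Function.iterate_succ_apply] at hl
          exact hdmin (tq.pred x) d' ⟨l, hl⟩
        obtain ⟨k', rfl⟩ : ∃ k', k = k' + 1 := ⟨k - 1, by omega⟩
        rw [Flow.piAux_succ, dif_neg hsp, IH k' (by omega) (tq.pred x) (by omega),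
          hπ x, hd', Flow.piAux_succ, dif_neg hsp, IH d' (by omega) (tq.pred x) hdp]
  have key : ∀ x, π x = stepv x (π (tq.pred x)) := by
    intro x
    by_cases hsp : ∃ l, x = a l
    · obtain ⟨l, hl⟩ := hsp
      have h1 : π x = b l := by rw [hπ]; exact hPspine _ _ _ hl
      have h2 : tq.pred x = a (l+1) := by rw [hl]; exact haS l
      have h3 : π (tq.pred x) = b (l+1) := by rw [hπ]; exact hPspine _ _ _ h2
      rw [h1, h3, hl, hstepv (a l) (tq.pred (a l)) rfl (b (l+1))]
      exact (hD2 (tq.pred (a l)) (b (l+1)) l (haS l) rfl rfl).symm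
    · have hd1 : depth x ≠ 0 := by
        intro h0
        obtain ⟨l, hl⟩ := hdspec x
        rw [h0, Function.iterate_zero_apply] at hl
        exact hsp ⟨l, hl⟩
      obtain ⟨d', hd'⟩ : ∃ d', depth x = d' + 1 := ⟨depth x - 1, by omega⟩
      have hdp : depth (tq.pred x) ≤ d' := by
        obtain ⟨l, hl⟩ := hdspec x
        rw [hd', Function.iterate_succ_apply] at hl
        exact hdmin (tq.pred x) d' ⟨l, hl⟩
      rw [hπ x, hd', Flow.piAux_succ, dif_neg hsp, hstable d' (tq.pred x) hdp]
  have hπpred : ∀ x, t.pred (π x) = π (tq.pred x) := fun x => by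
    rw [key x]; exact hstepv_pred x (π (tq.pred x))
  have hπval : ∀ (y x : Tq) (hy : tq.pred y = x), π y = ((D x (π x) (eE x ⟨y, hy⟩)) : T) := by
    intro y x hy
    rw [key y, hstepv y x hy, congrArg π hy]
  have hπeq : ∀ (x : Tq) (i : Fin q), π ((eE x).symm i).1 = ((D x (π x) i) : T) := by
    intro x i
    rw [hπval ((eE x).symm i).1 x ((eE x).symm i).2]
    exact congrArg (fun j => ((D x (π x) j) : T)) ((eE x).apply_symm_apply i)
  refine ⟨π, ⟨fun x => (hπpred x).symm, ?_⟩, ?_, by rw [hπ, hPspine _ _ 0 ha0.symm, hb0]⟩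
  · -- map_succ
    intro x
    ext z
    simp only [Set.mem_image, Set.mem_setOf_eq]
    constructor
    · rintro ⟨y, hy, rfl⟩
      rw [hπpred y, hy]
    · intro hz
      have hpos : 0 < Nat.card {i : Fin q // ((D x (π x) i) : T) = z} := by
        rw [hD1 x (π x) z hz]; exact hn1 z
      obtain ⟨⟨i, hi⟩⟩ := (Nat.card_pos_iff.mp hpos).1
      exact ⟨((eE x).symm i).1, ((eE x).symm i).2, by rw [hπeq x i]; exact hi⟩
  · -- FlowCompatible
    intro x
    have hfinA : {y : Tq | π y = π x ∧ tq.pred y = tq.pred x}.Finite :=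
      (tq.succ_finite (tq.pred x)).subset fun y hy => hy.2
    haveI : Fintype {y : Tq // π y = π x ∧ tq.pred y = tq.pred x} := hfinA.fintype
    have E : {y : Tq // π y = π x ∧ tq.pred y = tq.pred x} ≃
        {i : Fin q // ((D (tq.pred x) (π (tq.pred x)) i) : T) = π x} :=
      { toFun := fun y => ⟨eE (tq.pred x) ⟨y.1, y.2.2⟩, by
          rw [← hπval y.1 (tq.pred x) y.2.2]; exact y.2.1⟩
        invFun := fun i => ⟨((eE (tq.pred x)).symm i.1).1,
          by rw [hπeq (tq.pred x) i.1]; exact i.2, ((eE (tq.pred x)).symm i.1).2⟩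
        left_inv := fun y => Subtype.ext (by simp only [Equiv.symm_apply_apply])
        right_inv := fun i => Subtype.ext ((eE (tq.pred x)).apply_symm_apply i.1) }
    have hcardA : Nat.card {y : Tq // π y = π x ∧ tq.pred y = tq.pred x} = n (π x) := by
      rw [Nat.card_congr E]
      exact hD1 (tq.pred x) (π (tq.pred x)) (π x) (hπpred x)
    have hlevx : ∀ y : Tq, tq.pred y = tq.pred x → levq y = levq x := by
      intro y hy
      have h1 := hlevq y
      have h2 := hlevq x
      rw [hy] at h1
      omega
    have hnum : (∑' y : {y : Tq // π y = π x ∧ tq.pred y = tq.pred x},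
        Flow.canonicalFlow q levq y.1) = (n (π x) : ℝ) * (q:ℝ) ^ (levq x) := by
      rw [tsum_fintype]
      rw [Finset.sum_congr rfl (fun (y : {y : Tq // π y = π x ∧ tq.pred y = tq.pred x}) _ =>
        show Flow.canonicalFlow q levq y.1 = (q:ℝ) ^ (levq x) by
          simp only [Flow.canonicalFlow]; rw [hlevx y.1 y.2.2])]
      rw [Finset.sum_const, Finset.card_univ, nsmul_eq_mul]
      congr 1
      rw [← Nat.card_eq_fintype_card, hcardA]
    show m (π x) / m (t.pred (π x)) = _ / Flow.canonicalFlow q levq (tq.pred x)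
    rw [hnum]
    have hden : Flow.canonicalFlow q levq (tq.pred x) = (q:ℝ) ^ (levq x) * q := by
      simp only [Flow.canonicalFlow]
      rw [hlevq x, zpow_add_one₀ hq0']
    rw [hden]
    have hzl : ((q:ℝ)) ^ (levq x) ≠ 0 := zpow_ne_zero _ hq0'
    rw [div_eq_div_iff (hm.pos _).ne' (mul_ne_zero hzl hq0')]
    linear_combination ((q:ℝ) ^ (levq x)) * hn2 (π x)
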